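/- Let n ∈ ℕ, Λ > 0, and let α ≤ n. Let b < n, let γ_1, …, γ_b ∈ S^α and h ∈ S^α, and let t_1, …, t_b ∈ [0,1], x ∈ X. Then for every g ∈ G: d_{S^n,n,Λ}( (Γ(h,t_b,γ_b,…,γ_1,x), g), (Γ(e,t_b,γ_b,…,γ_1,x), gh) ) ≤ 2. -/

import Mathlib

open scoped ENNReal

structure HomotopyCoherentAction (G : Type*) [Group G] (X : Type*) [TopologicalSpace X] where
  Γ : List (G × unitInterval) → G → X → X
  continuous' : ∀ (k : ℕ) (γ : Fin k → G) (γ₀ : G),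
    Continuous fun p : (Fin k → unitInterval) × X =>
      Γ (List.ofFn fun i => (γ i, p.1 i)) γ₀ p.2
  split : ∀ (L₁ L₂ : List (G × unitInterval)) (γ γ₀ : G) (x : X),
    Γ (L₁ ++ (γ, 0) :: L₂) γ₀ x = Γ L₁ γ (Γ L₂ γ₀ x)
  mul_mid : ∀ (L₁ L₂ : List (G × unitInterval)) (γ γ' : G) (t : unitInterval) (γ₀ : G) (x : X),
    Γ (L₁ ++ (γ, 1) :: (γ', t) :: L₂) γ₀ x = Γ (L₁ ++ (γ * γ', t) :: L₂) γ₀ x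
  mul_last : ∀ (L₁ : List (G × unitInterval)) (γ γ₀ : G) (x : X),
    Γ (L₁ ++ [(γ, 1)]) γ₀ x = Γ L₁ (γ * γ₀) x
  base_one : ∀ (L : List (G × unitInterval)) (γ₁ : G) (t₁ : unitInterval) (x : X),
    Γ (L ++ [(γ₁, t₁)]) 1 x = Γ L γ₁ x
  unit_mid : ∀ (L₁ L₂ : List (G × unitInterval)) (γ' : G) (t' t : unitInterval) (γ₀ : G) (x : X),
    Γ (L₁ ++ (γ', t') :: (1, t) :: L₂) γ₀ x = Γ (L₁ ++ (γ', t' * t) :: L₂) γ₀ x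
  unit_head : ∀ (L : List (G × unitInterval)) (t : unitInterval) (γ₀ : G) (x : X),
    Γ ((1, t) :: L) γ₀ x = Γ L γ₀ x
  unit_nil : ∀ x : X, Γ [] 1 x = x

variable {G : Type*} [Group G] {X : Type*}

/-- `Γ(r_k, t_k, …, r_1, t_1, r_0, z)` for `r : Fin (k+1) → G`, `t : Fin k → [0,1]`. -/
def gammaWord [TopologicalSpace X] (A : HomotopyCoherentAction G X) {k : ℕ}
    (r : Fin (k + 1) → G) (t : Fin k → unitInterval) (z : X) : X :=
  A.Γ ((List.ofFn fun j : Fin k => (r j.succ, t j)).reverse) (r 0) z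

/-- The condition that the data `(xs, zs, a, b)` forms an admissible chain from `(x,g)` to
`(y,h)` in the definition of the extended metric `d_{S,k,Λ}`. -/
def ChainCond [MetricSpace X] (A : HomotopyCoherentAction G X) (S : Set G) (k : ℕ)
    (x y : X) (g h : G) {l : ℕ} (xs zs : Fin (l + 1) → X) (a b : Fin l → G) : Prop :=
  xs 0 = x ∧ zs (Fin.last l) = y ∧
  g * (List.ofFn fun i : Fin l => (a i)⁻¹ * b i).prod = h ∧
  ∀ i : Fin l, ∃ (r s : Fin (k + 1) → G) (t u : Fin k → unitInterval),
    (∀ j, r j ∈ S) ∧ (∀ j, s j ∈ S) ∧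
    a i = (List.ofFn r).reverse.prod ∧ b i = (List.ofFn s).reverse.prod ∧
    gammaWord A r t (zs i.castSucc) = gammaWord A s u (xs i.succ)

/-- The extended metric `d_{S,k,Λ}` on `X × G`. -/
noncomputable def coherentDist [MetricSpace X] (A : HomotopyCoherentAction G X)
    (S : Set G) (k : ℕ) (Λ : ℝ) (p q : X × G) : ℝ≥0∞ :=
  ⨅ (l : ℕ) (xs : Fin (l + 1) → X) (zs : Fin (l + 1) → X) (a : Fin l → G) (b : Fin l → G)
    (_ : ChainCond A S k p.1 q.1 p.2 q.2 xs zs a b),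
      (l : ℝ≥0∞) + ∑ i : Fin (l + 1), ENNReal.ofReal (Λ * dist (xs i) (zs i))

section Aux

variable {G : Type*} [Group G] {X : Type*} [TopologicalSpace X]

theorem gamma_unit_list (A : HomotopyCoherentAction G X) :
    ∀ (L : List (G × unitInterval)), (∀ p ∈ L, p.1 = 1) → ∀ z : X, A.Γ L 1 z = z := by
  intro L
  induction L with
  | nil => intro _ z; exact A.unit_nil z
  | cons p L ih =>
    intro hp z
    have h1 : p = ((1 : G), p.2) := by
      have := hp p List.mem_cons_self
      exact Prod.ext this rfl
    rw [h1, A.unit_head]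
    exact ih (fun q hq => hp q (List.mem_cons_of_mem _ hq)) z

theorem gamma_replicate (A : HomotopyCoherentAction G X) (q : ℕ) :
    ∀ (L : List (G × unitInterval)) (γ₀ : G) (z : X),
      A.Γ (List.replicate q ((1 : G), (1 : unitInterval)) ++ L) γ₀ z = A.Γ L γ₀ z := by
  induction q with
  | zero => intro L γ₀ z; simp
  | succ q ih =>
    intro L γ₀ z
    rw [List.replicate_succ, List.cons_append, A.unit_head]
    exact ih L γ₀ z

theorem gammaWord_const_one (A : HomotopyCoherentAction G X) {k : ℕ}
    (u : Fin k → unitInterval) (z : X) :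
    gammaWord A (fun _ => (1 : G)) u z = z := by
  unfold gammaWord
  apply gamma_unit_list
  intro p hp
  rw [List.mem_reverse, List.mem_ofFn] at hp
  obtain ⟨j, hj⟩ := hp
  rw [← hj]

/-- Extend a word of length `b+1` to length `n+1` by padding with `1`s at the top. -/
def extWord {b n : ℕ} (w : Fin (b + 1) → G) : Fin (n + 1) → G :=
  fun j => if hj : (j : ℕ) < b + 1 then w ⟨j, hj⟩ else 1

/-- Extend times by padding with `1`s. -/
def extTime {b n : ℕ} (t : Fin b → unitInterval) : Fin n → unitInterval :=
  fun j => if hj : (j : ℕ) < b then t ⟨j, hj⟩ else 1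

theorem extWord_list_eq {b n : ℕ} (hbn : b ≤ n) (w : Fin (b + 1) → G)
    (t : Fin b → unitInterval) :
    (List.ofFn fun j : Fin n => ((extWord w : Fin (n+1) → G) j.succ, (extTime t : Fin n → unitInterval) j)) =
      (List.ofFn fun j : Fin b => (w j.succ, t j)) ++
        List.replicate (n - b) ((1 : G), (1 : unitInterval)) := by
  apply List.ext_getElem
  · simp; omega
  · intro i h1 h2
    simp only [List.length_ofFn] at h1
    rw [List.getElem_ofFn]
    by_cases hib : i < b
    · rw [List.getElem_append_left (by rw [List.length_ofFn]; exact hib), List.getElem_ofFn]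
      simp only [extWord, extTime, Fin.succ, Fin.val_mk]
      rw [dif_pos (by omega), dif_pos hib]
    · rw [List.getElem_append_right (by rw [List.length_ofFn]; omega)]
      simp only [List.getElem_replicate, extWord, extTime, Fin.succ, Fin.val_mk]
      rw [dif_neg (by omega), dif_neg hib]

theorem extWord_ofFn_eq {b n : ℕ} (hbn : b ≤ n) (w : Fin (b + 1) → G) :
    List.ofFn (extWord w : Fin (n+1) → G) =
      List.ofFn w ++ List.replicate (n - b) (1 : G) := by
  apply List.ext_getElem
  · simp; omega
  · intro i h1 h2
    simp only [List.length_ofFn] at h1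
    rw [List.getElem_ofFn]
    by_cases hib : i < b + 1
    · rw [List.getElem_append_left (by rw [List.length_ofFn]; exact hib), List.getElem_ofFn]
      simp only [extWord, Fin.val_mk]
      rw [dif_pos hib]
    · rw [List.getElem_append_right (by rw [List.length_ofFn]; omega)]
      simp only [List.getElem_replicate, extWord, Fin.val_mk]
      rw [dif_neg hib]

theorem gammaWord_extWord (A : HomotopyCoherentAction G X) {b n : ℕ} (hbn : b ≤ n)
    (w : Fin (b + 1) → G) (t : Fin b → unitInterval) (x : X) :
    gammaWord A (extWord w : Fin (n+1) → G) (extTime t) x = gammaWord A w t x := by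
  unfold gammaWord
  rw [extWord_list_eq hbn, List.reverse_append, List.reverse_replicate, gamma_replicate]
  congr 1

theorem extWord_prod {b n : ℕ} (hbn : b ≤ n) (w : Fin (b + 1) → G) :
    (List.ofFn (extWord w : Fin (n+1) → G)).reverse.prod =
      (List.ofFn w).reverse.prod := by
  rw [extWord_ofFn_eq hbn, List.reverse_append, List.reverse_replicate, List.prod_append,
    List.prod_replicate, one_pow, one_mul]

theorem snoc_prod {b : ℕ} (γ : Fin b → G) (c : G) :
    (List.ofFn (Fin.snoc γ c)).reverse.prod = c * (List.ofFn γ).reverse.prod := by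
  rw [List.ofFn_succ', List.concat_eq_append, List.reverse_append]
  simp [Fin.snoc_castSucc, Fin.snoc_last]

end Aux
open scoped Pointwise

/-- For `α ≤ n`, `b < n`, `γ_1,…,γ_b, h ∈ S^α` and parameters `t_i`, the points
`(Γ(h,t_b,γ_b,…,γ_1,x), g)` and `(Γ(e,t_b,γ_b,…,γ_1,x), gh)` have `d_{S^n,n,Λ}`-distance
at most `2`. -/
theorem dist_translate_le_two {G : Type*} [Group G] {X : Type*} [MetricSpace X]
    (A : HomotopyCoherentAction G X) (S : Set G) (hSfin : S.Finite) (hS1 : (1 : G) ∈ S)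
    (hSsymm : S⁻¹ = S) (hSgen : Subgroup.closure S = ⊤)
    (n : ℕ) (Λ : ℝ) (hΛ : 0 < Λ) (α : ℕ) (hα : α ≤ n)
    (b : ℕ) (hb : b < n) (γ : Fin b → G) (hγ : ∀ i, γ i ∈ S ^ α)
    (h : G) (hh : h ∈ S ^ α) (t : Fin b → unitInterval) (x : X) (g : G) :
    coherentDist A (S ^ n) n Λ
      (gammaWord A (Fin.snoc γ h) t x, g)
      (gammaWord A (Fin.snoc γ (1 : G)) t x, g * h) ≤ 2 := by
  have hSn1 : (1 : G) ∈ S ^ n := Set.one_mem_pow hS1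
  have hsub : S ^ α ⊆ S ^ n := Set.pow_subset_pow_right hS1 hα
  have hbn : b ≤ n := hb.le
  set P := gammaWord A (Fin.snoc γ h) t x with hP
  set Q := gammaWord A (Fin.snoc γ (1 : G)) t x with hQ
  set sh : Fin (n + 1) → G := extWord (Fin.snoc γ h) with hsh
  set s1 : Fin (n + 1) → G := extWord (Fin.snoc γ (1 : G)) with hs1
  set one : Fin (n + 1) → G := fun _ => (1 : G) with hone
  have honeprod : (List.ofFn one).reverse.prod = 1 := by
    simp [hone, List.ofFn_const]
  set W : G := (List.ofFn γ).reverse.prod with hW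
  have hshprod : (List.ofFn sh).reverse.prod = h * W := by
    rw [hsh, extWord_prod hbn, snoc_prod]
  have hs1prod : (List.ofFn s1).reverse.prod = W := by
    rw [hs1, extWord_prod hbn, snoc_prod, one_mul]
  have hsnocmem : ∀ (c : G), c ∈ S ^ n → ∀ k : Fin (b + 1), (Fin.snoc γ c : Fin (b + 1) → G) k ∈ S ^ n := by
    intro c hc k
    refine Fin.lastCases ?_ ?_ k
    · rw [Fin.snoc_last]; exact hc
    · intro i; rw [Fin.snoc_castSucc]; exact hsub (hγ i)
  have hextmem : ∀ (c : G), c ∈ S ^ n →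
      ∀ j, (extWord (Fin.snoc γ c) : Fin (n + 1) → G) j ∈ S ^ n := by
    intro c hc j
    unfold extWord
    split
    · exact hsnocmem c hc _
    · exact hSn1
  set a : Fin 2 → G := ![1, W] with ha
  set bb : Fin 2 → G := ![h * W, 1] with hbb
  set xs : Fin 3 → X := ![P, x, Q] with hxs
  have hchain : ChainCond A (S ^ n) n (P, g).1 (Q, g * h).1 (P, g).2 (Q, g * h).2
      xs xs a bb := by
    refine ⟨rfl, rfl, ?_, ?_⟩
    · show g * (List.ofFn fun i : Fin 2 => (a i)⁻¹ * bb i).prod = g * h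
      simp only [List.ofFn_succ, List.ofFn_zero, List.prod_cons, List.prod_nil, ha, hbb]
      simp [Matrix.cons_val_zero, Matrix.cons_val_one, Matrix.head_cons, mul_assoc]
    · intro i
      fin_cases i
      · refine ⟨one, sh, fun _ => 1, extTime t, fun j => hSn1, hextmem h (hsub hh),
          honeprod.symm, ?_, ?_⟩
        · show bb 0 = (List.ofFn sh).reverse.prod
          rw [hshprod]; rfl
        · show gammaWord A one (fun _ => 1) (xs 0) = gammaWord A sh (extTime t) (xs 1)
          rw [hone]
          rw [gammaWord_const_one]
          show xs 0 = gammaWord A sh (extTime t) (xs 1)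
          rw [hsh]
          show xs 0 = gammaWord A (extWord (Fin.snoc γ h)) (extTime t) x
          rw [gammaWord_extWord A hbn]
          rfl
      · refine ⟨s1, one, extTime t, fun _ => 1, hextmem 1 hSn1, fun j => hSn1,
          ?_, honeprod.symm, ?_⟩
        · show a 1 = (List.ofFn s1).reverse.prod
          rw [hs1prod]; rfl
        · show gammaWord A s1 (extTime t) (xs 1) = gammaWord A one (fun _ => 1) (xs 2)
          rw [hone, gammaWord_const_one, hs1]
          show gammaWord A (extWord (Fin.snoc γ (1 : G))) (extTime t) x = xs 2
          rw [gammaWord_extWord A hbn]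
          rfl
  have hle : coherentDist A (S ^ n) n Λ (P, g) (Q, g * h) ≤
      ((2 : ℕ) : ℝ≥0∞) + ∑ i : Fin 3, ENNReal.ofReal (Λ * dist (xs i) (xs i)) := by
    rw [coherentDist]
    exact iInf_le_of_le 2 (iInf_le_of_le xs (iInf_le_of_le xs (iInf_le_of_le a
      (iInf_le_of_le bb (iInf_le_of_le hchain le_rfl)))))
  refine hle.trans ?_
  simp [dist_self]
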